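/- If T satisfies the Rakotch contractive condition and the Leray–Schauder boundary condition on G with 0 ∈ Int(G), then T has a unique fixed point x₁ ∈ cl(G), the map t ↦ x_t (where x_t is the unique fixed point of tT) is continuous on [0,1], and x₁ = lim_{t→1⁻} x_t. -/

import Mathlib

open Filter Topology

set_option maxHeartbeats 2000000 in
/-- Theorem 2, second part: under the Rakotch condition and the
Leray–Schauder condition, `T` has a unique fixed point `x₁ ∈ cl G`,
`t ↦ x_t` is continuous on `[0,1]`, and `x₁ = lim_{t→1⁻} x_t`. -/
theorem stmt_17 {Y : Type*} [NormedAddCommGroup Y] [NormedSpace ℝ Y] [CompleteSpace Y]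
    (G : Set Y) (hGne : G.Nonempty) (h0 : (0:Y) ∈ interior G)
    (T : Y → Y) (φ : ℝ → ℝ)
    (hφmono : AntitoneOn φ (Set.Ici 0))
    (hφrange : ∀ s ≥ (0:ℝ), φ s ∈ Set.Icc (0:ℝ) 1)
    (hφlt : ∀ s > (0:ℝ), φ s < 1)
    (hT : ∀ x ∈ closure G, ∀ y ∈ closure G, ‖T x - T y‖ ≤ φ ‖x - y‖ * ‖x - y‖)
    (hLS : ∀ x ∈ frontier G, ∀ l : ℝ, 1 < l → T x ≠ l • x) :
    ∃ x : ℝ → Y,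
      (∀ t ∈ Set.Ico (0:ℝ) 1, x t ∈ interior G ∧ t • T (x t) = x t ∧
        ∀ y ∈ closure G, t • T y = y → y = x t) ∧
      x 1 ∈ closure G ∧ T (x 1) = x 1 ∧
      (∀ y ∈ closure G, T y = y → y = x 1) ∧
      ContinuousOn x (Set.Icc 0 1) ∧
      Tendsto x (nhdsWithin 1 (Set.Ico (0:ℝ) 1)) (𝓝 (x 1)) := by
  have h0cl : (0:Y) ∈ closure G := subset_closure (interior_subset h0)
  set c : ℝ := ‖T 0‖ with hc
  have hc0 : (0:ℝ) ≤ c := norm_nonneg _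
  have hφ1 : φ 1 < 1 := hφlt 1 one_pos
  set M₀ : ℝ := max 1 (c / (1 - φ 1)) with hM₀def
  set M : ℝ := M₀ + c with hMdef
  have hM₀1 : (1:ℝ) ≤ M₀ := le_max_left _ _
  have hMpos : (0:ℝ) < M := by simp only [hMdef]; linarith
  have hφ0 : ∀ s ≥ (0:ℝ), 0 ≤ φ s := fun s hs => (hφrange s hs).1
  have hφle1 : ∀ s ≥ (0:ℝ), φ s ≤ 1 := fun s hs => (hφrange s hs).2
  -- T is 1-Lipschitz on closure G
  have hTLip : ∀ x ∈ closure G, ∀ y ∈ closure G, ‖T x - T y‖ ≤ ‖x - y‖ := by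
    intro x hx y hy
    calc ‖T x - T y‖ ≤ φ ‖x - y‖ * ‖x - y‖ := hT x hx y hy
    _ ≤ 1 * ‖x - y‖ :=
        mul_le_mul_of_nonneg_right (hφle1 _ (norm_nonneg _)) (norm_nonneg _)
    _ = ‖x - y‖ := one_mul _
  -- uniform bound on fixed points and their images
  have hbound : ∀ t ∈ Set.Icc (0:ℝ) 1, ∀ x ∈ closure G, t • T x = x →
      ‖x‖ ≤ M₀ ∧ ‖T x‖ ≤ M := by
    intro t ht x hx hfix
    have hx_le : ‖x‖ ≤ ‖T x‖ := by
      have h1 : ‖t • T x‖ = |t| * ‖T x‖ := by rw [norm_smul, Real.norm_eq_abs]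
      rw [hfix] at h1
      rw [h1, abs_of_nonneg ht.1]
      exact mul_le_of_le_one_left (norm_nonneg _) ht.2
    have hTx : ‖T x‖ ≤ φ ‖x‖ * ‖x‖ + c := by
      have := hT x hx 0 h0cl
      simp only [sub_zero] at this
      calc ‖T x‖ = ‖(T x - T 0) + T 0‖ := by congr 1; abel
      _ ≤ ‖T x - T 0‖ + ‖T 0‖ := norm_add_le _ _
      _ ≤ φ ‖x‖ * ‖x‖ + c := by rw [hc]; linarith
    have hφx0 : 0 ≤ φ ‖x‖ := hφ0 _ (norm_nonneg _)
    have hφx1 : φ ‖x‖ ≤ 1 := hφle1 _ (norm_nonneg _)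
    rcases le_or_gt ‖x‖ 1 with h1 | h1
    · constructor
      · linarith
      · have : φ ‖x‖ * ‖x‖ ≤ ‖x‖ := by nlinarith [norm_nonneg x]
        simp only [hMdef]; linarith
    · have hφx : φ ‖x‖ ≤ φ 1 := hφmono (Set.mem_Ici.2 zero_le_one)
        (Set.mem_Ici.2 (by positivity : (0:ℝ) ≤ ‖x‖)) h1.le
      have hx1 : ‖x‖ * (1 - φ 1) ≤ c := by nlinarith
      have hxM : ‖x‖ ≤ c / (1 - φ 1) := by
        rw [le_div_iff₀ (by linarith : (0:ℝ) < 1 - φ 1)]; linarith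
      have hxM₀ : ‖x‖ ≤ M₀ := hxM.trans (le_max_right _ _)
      constructor
      · exact hxM₀
      · have : φ ‖x‖ * ‖x‖ ≤ ‖x‖ := by nlinarith [norm_nonneg x]
        simp only [hMdef]; linarith
  -- modulus function ψ ε = ε (1 - φ ε)
  have hψpos : ∀ ε > (0:ℝ), 0 < ε * (1 - φ ε) := by
    intro ε hε
    have := hφlt ε hε
    nlinarith
  have hψmono : ∀ ε d : ℝ, 0 < ε → ε ≤ d → ε * (1 - φ ε) ≤ d * (1 - φ d) := by
    intro ε d hε hεd
    have h1 : φ d ≤ φ ε := hφmono (Set.mem_Ici.2 hε.le) (Set.mem_Ici.2 (hε.le.trans hεd)) hεd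
    have h2 : φ ε ≤ 1 := hφle1 _ hε.le
    nlinarith
  -- key inequality between fixed points at parameters s, t
  have key : ∀ s ∈ Set.Icc (0:ℝ) 1, ∀ t ∈ Set.Icc (0:ℝ) 1,
      ∀ x ∈ closure G, ∀ y ∈ closure G, s • T x = x → t • T y = y →
      ‖x - y‖ * (1 - φ ‖x - y‖) ≤ |s - t| * M := by
    intro s hs t ht x hx y hy hfx hfy
    have hdec : x - y = s • (T x - T y) + (s - t) • T y := by
      have h1 : s • (T x - T y) + (s - t) • T y = s • T x - t • T y := by
        rw [smul_sub, sub_smul]; abel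
      rw [h1, hfx, hfy]
    have hTy : ‖T y‖ ≤ M := (hbound t ht y hy hfy).2
    set d : ℝ := ‖x - y‖ with hd
    have hd0 : 0 ≤ d := norm_nonneg _
    have h1 : d ≤ s * ‖T x - T y‖ + |s - t| * ‖T y‖ := by
      calc d = ‖s • (T x - T y) + (s - t) • T y‖ := by rw [hd, hdec]
      _ ≤ ‖s • (T x - T y)‖ + ‖(s - t) • T y‖ := norm_add_le _ _
      _ = |s| * ‖T x - T y‖ + |s - t| * ‖T y‖ := by
          rw [norm_smul, norm_smul, Real.norm_eq_abs, Real.norm_eq_abs]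
      _ = s * ‖T x - T y‖ + |s - t| * ‖T y‖ := by rw [abs_of_nonneg hs.1]
    have h2 : ‖T x - T y‖ ≤ φ d * d := hT x hx y hy
    have h3 : s * ‖T x - T y‖ ≤ φ d * d := by
      have h4 : 0 ≤ φ d * d := mul_nonneg (hφ0 _ hd0) hd0
      nlinarith [hs.1, hs.2, norm_nonneg (T x - T y)]
    have h5 : |s - t| * ‖T y‖ ≤ |s - t| * M :=
      mul_le_mul_of_nonneg_left hTy (abs_nonneg _)
    nlinarith
  -- uniqueness of fixed points for a given parameter
  have huniq : ∀ t ∈ Set.Icc (0:ℝ) 1, ∀ x ∈ closure G, ∀ y ∈ closure G,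
      t • T x = x → t • T y = y → x = y := by
    intro t ht x hx y hy hfx hfy
    by_contra hne
    have hd : 0 < ‖x - y‖ := by
      rw [norm_pos_iff, sub_ne_zero]; exact hne
    have h1 := key t ht t ht x hx y hy hfx hfy
    simp only [sub_self, abs_zero, zero_mul] at h1
    have := hψpos _ hd
    linarith
  -- ε-δ version of the key inequality
  have key' : ∀ ε > (0:ℝ), ∀ s ∈ Set.Icc (0:ℝ) 1, ∀ t ∈ Set.Icc (0:ℝ) 1,
      ∀ x ∈ closure G, ∀ y ∈ closure G, s • T x = x → t • T y = y →
      |s - t| * M < ε * (1 - φ ε) → ‖x - y‖ < ε := by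
    intro ε hε s hs t ht x hx y hy hfx hfy hst
    by_contra hcon
    push_neg at hcon
    have h1 := key s hs t ht x hx y hy hfx hfy
    have h2 := hψmono ε ‖x - y‖ hε hcon
    linarith
  -- fixed points for parameter < 1 lie in the interior
  have hint : ∀ t ∈ Set.Ico (0:ℝ) 1, ∀ x ∈ closure G, t • T x = x →
      x ∈ interior G := by
    intro t ht x hx hfix
    by_contra hxi
    have hfr : x ∈ frontier G := by
      rw [frontier_eq_closure_inter_closure]
      constructor
      · exact hx
      · rw [closure_compl]
        exact hxi
    rcases eq_or_lt_of_le ht.1 with h0t | h0t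
    · have hx0 : x = 0 := by rw [← hfix, ← h0t, zero_smul]
      rw [hx0] at hxi
      exact hxi h0
    · have hinv : T x = t⁻¹ • x := by
        have h := congrArg (fun z => t⁻¹ • z) hfix
        simpa [smul_smul, inv_mul_cancel₀ (ne_of_gt h0t)] using h
      exact hLS x hfr t⁻¹ ((one_lt_inv₀ h0t).2 ht.2) hinv
  -- openness: from a fixed point at t < 1, get fixed points nearby
  have hopen : ∀ t ∈ Set.Ico (0:ℝ) 1, (∃ x ∈ closure G, t • T x = x) →
      ∃ δ > (0:ℝ), ∀ s ∈ Set.Icc (0:ℝ) 1, |s - t| ≤ δ →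
        ∃ z ∈ closure G, s • T z = z := by
    intro t ht ⟨x₀, hx₀, hfix₀⟩
    have htIcc : t ∈ Set.Icc (0:ℝ) 1 := ⟨ht.1, ht.2.le⟩
    have hx₀int : x₀ ∈ interior G := hint t ht x₀ hx₀ hfix₀
    obtain ⟨r, hr, hball⟩ := Metric.isOpen_iff.1 isOpen_interior x₀ hx₀int
    set ρ : ℝ := r / 2 with hρdef
    have hρ : 0 < ρ := by positivity
    have hK : Metric.closedBall x₀ ρ ⊆ closure G := by
      intro y hy
      apply subset_closure; apply interior_subset; apply hball
      exact lt_of_le_of_lt (Metric.mem_closedBall.1 hy) (by simp only [hρdef]; linarith)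
    have hTx₀ : ‖T x₀‖ ≤ M := (hbound t htIcc x₀ hx₀ hfix₀).2
    set δ : ℝ := min ((1 - t) / 2) (ρ * (1 - t) / (2 * M)) with hδdef
    have h1t : (0:ℝ) < 1 - t := by linarith [ht.2]
    have hδ : 0 < δ := by
      apply lt_min
      · linarith
      · exact div_pos (mul_pos hρ h1t) (by linarith)
    refine ⟨δ, hδ, fun s hs hst => ?_⟩
    have hs1 : s ≤ (1 + t) / 2 := by
      have h1 : s - t ≤ |s - t| := le_abs_self _
      have h2 : |s - t| ≤ (1 - t) / 2 := hst.trans (min_le_left _ _)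
      linarith
    have hstM : |s - t| * M ≤ ρ * (1 - t) / 2 := by
      have h2 : |s - t| ≤ ρ * (1 - t) / (2 * M) := hst.trans (min_le_right _ _)
      calc |s - t| * M ≤ (ρ * (1 - t) / (2 * M)) * M :=
        mul_le_mul_of_nonneg_right h2 hMpos.le
      _ = ρ * (1 - t) / 2 := by field_simp
    -- s • T maps the closed ball into itself
    have hmap : ∀ y ∈ Metric.closedBall x₀ ρ, s • T y ∈ Metric.closedBall x₀ ρ := by
      intro y hy
      have hyG : y ∈ closure G := hK hy
      have hyd : ‖y - x₀‖ ≤ ρ := by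
        rw [← dist_eq_norm]; exact Metric.mem_closedBall.1 hy
      have h1 : ‖T y - T x₀‖ ≤ ρ := (hTLip y hyG x₀ hx₀).trans hyd
      have hdec : s • T y - x₀ = s • (T y - T x₀) + (s - t) • T x₀ := by
        have h2 : s • (T y - T x₀) + (s - t) • T x₀ = s • T y - t • T x₀ := by
          rw [smul_sub, sub_smul]; abel
        rw [h2, hfix₀]
      rw [Metric.mem_closedBall, dist_eq_norm, hdec]
      calc ‖s • (T y - T x₀) + (s - t) • T x₀‖
          ≤ ‖s • (T y - T x₀)‖ + ‖(s - t) • T x₀‖ := norm_add_le _ _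
      _ = |s| * ‖T y - T x₀‖ + |s - t| * ‖T x₀‖ := by
          rw [norm_smul, norm_smul, Real.norm_eq_abs, Real.norm_eq_abs]
      _ ≤ s * ρ + |s - t| * M := by
          have := abs_of_nonneg hs.1
          have h4 : |s| * ‖T y - T x₀‖ ≤ s * ρ := by
            rw [this]
            exact mul_le_mul (le_refl s) h1 (norm_nonneg _) hs.1
          have h5 : |s - t| * ‖T x₀‖ ≤ |s - t| * M :=
            mul_le_mul_of_nonneg_left hTx₀ (abs_nonneg _)
          linarith
      _ ≤ ρ := by nlinarith [hρ]
    -- Banach fixed point on the closed ball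
    set K := Metric.closedBall x₀ ρ with hKdef
    haveI : Nonempty K := ⟨⟨x₀, Metric.mem_closedBall_self hρ.le⟩⟩
    haveI : CompleteSpace K := Metric.isClosed_closedBall.completeSpace_coe
    set k : NNReal := ⟨(1 + t) / 2, by linarith [ht.1]⟩ with hkdef
    set g : K → K := fun y => ⟨s • T y, hmap y y.2⟩ with hgdef
    have hcontr : ContractingWith k g := by
      constructor
      · rw [← NNReal.coe_lt_coe]
        show (1 + t) / 2 < (1:ℝ)
        linarith [ht.2]
      · apply LipschitzWith.of_dist_le_mul
        intro y z
        rw [Subtype.dist_eq, Subtype.dist_eq, dist_eq_norm, dist_eq_norm]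
        show ‖s • T y - s • T z‖ ≤ (1 + t) / 2 * ‖(y:Y) - z‖
        rw [← smul_sub, norm_smul, Real.norm_eq_abs, abs_of_nonneg hs.1]
        have h1 : ‖T y - T z‖ ≤ ‖(y:Y) - z‖ := hTLip y (hK y.2) z (hK z.2)
        calc s * ‖T ↑y - T ↑z‖ ≤ s * ‖(y:Y) - z‖ :=
            mul_le_mul_of_nonneg_left h1 hs.1
        _ ≤ (1 + t) / 2 * ‖(y:Y) - z‖ :=
            mul_le_mul_of_nonneg_right hs1 (norm_nonneg _)
    obtain ⟨z, hz⟩ : ∃ z : K, g z = z :=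
      ⟨ContractingWith.fixedPoint g hcontr, hcontr.fixedPoint_isFixedPt⟩
    refine ⟨(z : Y), hK z.2, ?_⟩
    exact congrArg Subtype.val hz
  -- closedness: fixed points pass to limits of parameters
  have hclosed : ∀ t ∈ Set.Icc (0:ℝ) 1, ∀ u : ℕ → ℝ,
      (∀ n, u n ∈ Set.Icc (0:ℝ) 1) → (∀ n, ∃ z ∈ closure G, u n • T z = z) →
      Tendsto u atTop (𝓝 t) → ∃ z ∈ closure G, t • T z = z := by
    intro t ht u hu hufix hulim
    choose w hwG hwfix using hufix
    have hcauchy : CauchySeq w := by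
      rw [Metric.cauchySeq_iff]
      intro ε hε
      have hψ := hψpos ε hε
      have hucauchy : CauchySeq u := hulim.cauchySeq
      rw [Metric.cauchySeq_iff] at hucauchy
      obtain ⟨N, hN⟩ := hucauchy (ε * (1 - φ ε) / M) (div_pos hψ hMpos)
      refine ⟨N, fun m hm n hn => ?_⟩
      rw [dist_eq_norm]
      apply key' ε hε (u m) (hu m) (u n) (hu n) (w m) (hwG m) (w n) (hwG n)
        (hwfix m) (hwfix n)
      have h1 : |u m - u n| < ε * (1 - φ ε) / M := by
        rw [← Real.dist_eq]; exact hN m hm n hn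
      calc |u m - u n| * M < (ε * (1 - φ ε) / M) * M :=
          mul_lt_mul_of_pos_right h1 hMpos
      _ = ε * (1 - φ ε) := by field_simp
    obtain ⟨z, hz⟩ := cauchySeq_tendsto_of_complete hcauchy
    have hzG : z ∈ closure G := isClosed_closure.mem_of_tendsto hz
      (Filter.Eventually.of_forall hwG)
    refine ⟨z, hzG, ?_⟩
    have hTz : Tendsto (fun n => T (w n)) atTop (𝓝 (T z)) := by
      rw [tendsto_iff_norm_sub_tendsto_zero]
      apply squeeze_zero (fun n => norm_nonneg _) (fun n => hTLip (w n) (hwG n) z hzG)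
      rw [← tendsto_iff_norm_sub_tendsto_zero]; exact hz
    have hlim2 : Tendsto (fun n => u n • T (w n)) atTop (𝓝 (t • T z)) :=
      hulim.smul hTz
    have hlim3 : Tendsto (fun n => u n • T (w n)) atTop (𝓝 z) := by
      simp only [hwfix]; exact hz
    exact tendsto_nhds_unique hlim2 hlim3
  -- existence for all parameters in [0,1]
  have h0fix : ∃ z ∈ closure G, (0:ℝ) • T z = z := ⟨0, h0cl, by simp⟩
  have hIco : ∀ u ∈ Set.Ico (0:ℝ) 1, ∃ z ∈ closure G, u • T z = z := by
    intro u hu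
    by_contra hcon
    set S : Set ℝ := {t | t ∈ Set.Icc (0:ℝ) u ∧ ∃ z ∈ closure G, t • T z = z}
      with hSdef
    have h0S : (0:ℝ) ∈ S := ⟨⟨le_refl 0, hu.1⟩, h0fix⟩
    have hSne : S.Nonempty := ⟨0, h0S⟩
    have hSbdd : BddAbove S := ⟨u, fun x hx => hx.1.2⟩
    set v := sSup S with hv
    obtain ⟨w, hwmono, hwlim, hwmem⟩ := exists_seq_tendsto_sSup hSne hSbdd
    have hvIcc : v ∈ Set.Icc (0:ℝ) u :=
      ⟨le_csSup hSbdd h0S, csSup_le hSne (fun x hx => hx.1.2)⟩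
    have hv1 : v ∈ Set.Icc (0:ℝ) 1 := ⟨hvIcc.1, hvIcc.2.trans hu.2.le⟩
    have hvfix : ∃ z ∈ closure G, v • T z = z :=
      hclosed v hv1 w
        (fun n => ⟨(hwmem n).1.1, ((hwmem n).1.2).trans hu.2.le⟩)
        (fun n => (hwmem n).2) hwlim
    have hvlt1 : v < 1 := lt_of_le_of_lt hvIcc.2 hu.2
    obtain ⟨δ, hδ, hδfix⟩ := hopen v ⟨hv1.1, hvlt1⟩ hvfix
    have hvu : v ≠ u := by
      intro h; rw [h] at hvfix; exact hcon hvfix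
    have hvltu : v < u := lt_of_le_of_ne hvIcc.2 hvu
    set w' := min (v + δ) u with hw'
    have hw'v : v < w' := lt_min (by linarith) hvltu
    have hw'Icc : w' ∈ Set.Icc (0:ℝ) 1 :=
      ⟨le_min (by linarith [hv1.1, hδ]) hu.1, (min_le_right _ _).trans hu.2.le⟩
    have hw'fix : ∃ z ∈ closure G, w' • T z = z := by
      apply hδfix w' hw'Icc
      rw [abs_of_nonneg (by linarith : (0:ℝ) ≤ w' - v)]
      have : w' ≤ v + δ := min_le_left _ _
      linarith
    have hw'S : w' ∈ S := ⟨⟨hw'Icc.1, min_le_right _ _⟩, hw'fix⟩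
    have : w' ≤ v := le_csSup hSbdd hw'S
    linarith
  have hS : ∀ t ∈ Set.Icc (0:ℝ) 1, ∃ z ∈ closure G, t • T z = z := by
    intro t ht
    rcases eq_or_lt_of_le ht.2 with h1 | h1
    · subst h1
      set u : ℕ → ℝ := fun n => 1 - 1 / ((n:ℝ) + 1) with hu
      have humem : ∀ n, u n ∈ Set.Ico (0:ℝ) 1 := by
        intro n
        have h2 : (0:ℝ) < (n:ℝ) + 1 := by positivity
        have h3 : 1 / ((n:ℝ) + 1) ≤ 1 := by
          rw [div_le_one h2]; linarith [Nat.cast_nonneg (α := ℝ) n]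
        have h4 : 0 < 1 / ((n:ℝ) + 1) := by positivity
        exact ⟨by simp only [hu]; linarith, by simp only [hu]; linarith⟩
      have hulim : Tendsto u atTop (𝓝 1) := by
        have := tendsto_one_div_add_atTop_nhds_zero_nat (𝕜 := ℝ)
        have h5 : Tendsto u atTop (𝓝 (1 - 0)) := tendsto_const_nhds.sub this
        simpa using h5
      exact hclosed 1 ⟨zero_le_one, le_refl 1⟩ u
        (fun n => ⟨(humem n).1, (humem n).2.le⟩)
        (fun n => hIco (u n) (humem n)) hulim
    · exact hIco t ⟨ht.1, h1⟩
  -- define the fixed-point map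
  have hexist : ∀ t : ℝ, ∃ z : Y, t ∈ Set.Icc (0:ℝ) 1 →
      z ∈ closure G ∧ t • T z = z := by
    intro t
    by_cases h : t ∈ Set.Icc (0:ℝ) 1
    · obtain ⟨z, hz1, hz2⟩ := hS t h
      exact ⟨z, fun _ => ⟨hz1, hz2⟩⟩
    · exact ⟨0, fun h' => absurd h' h⟩
  choose x hx using hexist
  have hx1mem : (1:ℝ) ∈ Set.Icc (0:ℝ) 1 := ⟨zero_le_one, le_refl 1⟩
  have hcont : ContinuousOn x (Set.Icc 0 1) := by
    rw [Metric.continuousOn_iff]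
    intro b hb ε hε
    refine ⟨ε * (1 - φ ε) / M, div_pos (hψpos ε hε) hMpos, fun a ha hab => ?_⟩
    rw [dist_eq_norm]
    apply key' ε hε a ha b hb (x a) (hx a ha).1 (x b) (hx b hb).1
      (hx a ha).2 (hx b hb).2
    rw [Real.dist_eq] at hab
    calc |a - b| * M < (ε * (1 - φ ε) / M) * M :=
        mul_lt_mul_of_pos_right hab hMpos
    _ = ε * (1 - φ ε) := by field_simp
  refine ⟨x, ?_, (hx 1 hx1mem).1, ?_, ?_, hcont, ?_⟩
  · intro t ht
    have htIcc : t ∈ Set.Icc (0:ℝ) 1 := ⟨ht.1, ht.2.le⟩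
    refine ⟨hint t ht (x t) (hx t htIcc).1 (hx t htIcc).2, (hx t htIcc).2, ?_⟩
    intro y hy hfy
    exact huniq t htIcc y hy (x t) (hx t htIcc).1 hfy (hx t htIcc).2
  · have h1 := (hx 1 hx1mem).2; rwa [one_smul] at h1
  · intro y hy hfy
    exact huniq 1 hx1mem y hy (x 1) (hx 1 hx1mem).1
      (by rw [one_smul]; exact hfy) (hx 1 hx1mem).2
  · have h1 : ContinuousWithinAt x (Set.Icc 0 1) 1 := hcont 1 hx1mem
    exact Tendsto.mono_left h1 (nhdsWithin_mono 1 Set.Ico_subset_Icc_self)
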